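/- For the f-oscillator SODE Γ' = Σ_k (𝒱^k ∂/∂Q^k − (f'(E))² Q^k ∂/∂𝒱^k) on ℝ^{2n}, where E = ½Σ_k((v^k)² + (q^k)²) is the undeformed oscillator energy and Q^k = q^k, 𝒱^k = f'(E) v^k, the frequency Ω = f'(E) is a constant of motion of Γ' (assuming f' > 0), and each integral curve with Ω = ω₀ is periodic with period 2π/ω₀. -/

import Mathlib

open Real

/-- The undeformed oscillator energy `E = ½Σ((vᵏ)² + (qᵏ)²)`. -/
noncomputable def oscEnergy {n : ℕ} (q v : Fin n → ℝ) : ℝ :=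
  (∑ k, v k ^ 2 + ∑ k, q k ^ 2) / 2

/-- For the f-oscillator `Γ' = f'(E) Γ` (harmonic oscillator `Γ` deformed by `f`),
the frequency `Ω = f'(E)` is a constant of motion; in the adapted coordinates
`Qᵏ = qᵏ`, `𝒱ᵏ = f'(E) vᵏ` one has `Q' = 𝒱`, `𝒱' = −Ω² Q`, and (for `Ω = ω₀ > 0`)
every integral curve is periodic with period `2π/ω₀`. -/
theorem stmt_18 {n : ℕ} (f : ℝ → ℝ) (hf : ContDiff ℝ 2 f)
    (q v : ℝ → (Fin n → ℝ))
    (hq : ∀ t, HasDerivAt q (deriv f (oscEnergy (q t) (v t)) • v t) t)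
    (hv : ∀ t, HasDerivAt v (-(deriv f (oscEnergy (q t) (v t))) • q t) t)
    (hω : 0 < deriv f (oscEnergy (q 0) (v 0))) :
    (∀ t s : ℝ, oscEnergy (q t) (v t) = oscEnergy (q s) (v s)) ∧
    (∀ t : ℝ, HasDerivAt (fun t => deriv f (oscEnergy (q t) (v t)) • v t)
        (-(deriv f (oscEnergy (q 0) (v 0))) ^ 2 • q t) t) ∧
    (Function.Periodic q (2 * π / deriv f (oscEnergy (q 0) (v 0))) ∧
      Function.Periodic v (2 * π / deriv f (oscEnergy (q 0) (v 0)))) := by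
  have hqk : ∀ t k, HasDerivAt (fun t => q t k)
      (deriv f (oscEnergy (q t) (v t)) * v t k) t := by
    intro t k
    have := (hasDerivAt_pi.mp (hq t)) k
    simpa using this
  have hvk : ∀ t k, HasDerivAt (fun t => v t k)
      (-(deriv f (oscEnergy (q t) (v t))) * q t k) t := by
    intro t k
    have := (hasDerivAt_pi.mp (hv t)) k
    simpa using this
  have hE' : ∀ t, HasDerivAt (fun t => oscEnergy (q t) (v t)) 0 t := by
    intro t
    have h1 : HasDerivAt (fun t => ∑ k, v t k ^ 2)
        (∑ k, (2:ℕ) * v t k ^ 1 * (-(deriv f (oscEnergy (q t) (v t))) * q t k)) t :=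
      HasDerivAt.fun_sum fun k _ => by simpa using (hvk t k).fun_pow 2
    have h2 : HasDerivAt (fun t => ∑ k, q t k ^ 2)
        (∑ k, (2:ℕ) * q t k ^ 1 * (deriv f (oscEnergy (q t) (v t)) * v t k)) t :=
      HasDerivAt.fun_sum fun k _ => by simpa using (hqk t k).fun_pow 2
    have hsum := ((h1.add h2).div_const 2)
    have hz : (∑ k, (2:ℕ) * v t k ^ 1 * (-(deriv f (oscEnergy (q t) (v t))) * q t k)
        + ∑ k, (2:ℕ) * q t k ^ 1 * (deriv f (oscEnergy (q t) (v t)) * v t k)) / 2 = 0 := by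
      rw [← Finset.sum_add_distrib, Finset.sum_eq_zero]
      · norm_num
      · intro k _; ring
    rw [hz] at hsum
    simpa [oscEnergy] using hsum
  have hEc : ∀ t s : ℝ, oscEnergy (q t) (v t) = oscEnergy (q s) (v s) :=
    is_const_of_deriv_eq_zero (fun x => (hE' x).differentiableAt)
      (fun x => (hE' x).deriv)
  set ω := deriv f (oscEnergy (q 0) (v 0)) with hωdef
  have hωt : ∀ t, deriv f (oscEnergy (q t) (v t)) = ω := fun t => by rw [hEc t 0]
  have hω0 : ω ≠ 0 := ne_of_gt hω
  have hq' : ∀ t, HasDerivAt q (ω • v t) t := fun t => by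
    have := hq t; rwa [hωt t] at this
  have hv' : ∀ t, HasDerivAt v (-ω • q t) t := fun t => by
    have := hv t; rwa [hωt t] at this
  refine ⟨hEc, ?_, ?_⟩
  · intro t
    have heq : (fun t => deriv f (oscEnergy (q t) (v t)) • v t) = fun t => ω • v t := by
      funext s; rw [hωt s]
    rw [heq]
    have h := (hv' t).const_smul ω
    have hsm : ω • (-ω • q t) = -ω ^ 2 • q t := by
      rw [smul_smul]; congr 1; ring
    rwa [hsm] at h
  · have hc : ∀ t, HasDerivAt (fun t => Real.cos (ω * t)) (-Real.sin (ω * t) * ω) t := by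
      intro t
      have h : HasDerivAt (fun t : ℝ => ω * t) ω t := by
        simpa using (hasDerivAt_id t).const_mul ω
      exact h.cos
    have hs : ∀ t, HasDerivAt (fun t => Real.sin (ω * t)) (Real.cos (ω * t) * ω) t := by
      intro t
      have h : HasDerivAt (fun t : ℝ => ω * t) ω t := by
        simpa using (hasDerivAt_id t).const_mul ω
      exact h.sin
    set u : ℝ → Fin n → ℝ := fun t => Real.cos (ω * t) • q t - Real.sin (ω * t) • v t with hu
    set w : ℝ → Fin n → ℝ := fun t => Real.sin (ω * t) • q t + Real.cos (ω * t) • v t with hw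
    have hu' : ∀ t, HasDerivAt u 0 t := by
      intro t
      have h := (((hc t).fun_smul (hq' t)).fun_sub ((hs t).fun_smul (hv' t)))
      refine h.congr_deriv ?_
      module
    have hw' : ∀ t, HasDerivAt w 0 t := by
      intro t
      have h := (((hs t).fun_smul (hq' t)).fun_add ((hc t).fun_smul (hv' t)))
      refine h.congr_deriv ?_
      module
    have huc : ∀ t, u t = q 0 := by
      intro t
      have h := is_const_of_deriv_eq_zero (fun x => (hu' x).differentiableAt)
        (fun x => (hu' x).deriv) t 0
      simpa [hu] using h
    have hwc : ∀ t, w t = v 0 := by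
      intro t
      have h := is_const_of_deriv_eq_zero (fun x => (hw' x).differentiableAt)
        (fun x => (hw' x).deriv) t 0
      simpa [hw] using h
    have hqf : ∀ t, q t = Real.cos (ω * t) • q 0 + Real.sin (ω * t) • v 0 := by
      intro t
      have key : Real.cos (ω * t) • q 0 + Real.sin (ω * t) • v 0
          = (Real.cos (ω * t) ^ 2 + Real.sin (ω * t) ^ 2) • q t := by
        rw [← huc t, ← hwc t]
        simp only [hu, hw, smul_sub, smul_add, smul_smul]
        module
      rw [key, Real.cos_sq_add_sin_sq, one_smul]
    have hvf : ∀ t, v t = -Real.sin (ω * t) • q 0 + Real.cos (ω * t) • v 0 := by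
      intro t
      have key : -Real.sin (ω * t) • q 0 + Real.cos (ω * t) • v 0
          = (Real.cos (ω * t) ^ 2 + Real.sin (ω * t) ^ 2) • v t := by
        rw [← huc t, ← hwc t]
        simp only [hu, hw, smul_sub, smul_add, smul_smul, neg_smul]
        module
      rw [key, Real.cos_sq_add_sin_sq, one_smul]
    have harg : ∀ t : ℝ, ω * (t + 2 * π / ω) = ω * t + 2 * π := by
      intro t; field_simp
    constructor
    · intro t
      rw [hqf (t + 2 * π / ω), hqf t, harg, Real.cos_add_two_pi, Real.sin_add_two_pi]
    · intro t
      rw [hvf (t + 2 * π / ω), hvf t, harg, Real.cos_add_two_pi, Real.sin_add_two_pi]
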